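/- arXiv:1409.2787 — 4 statements merged into one kernel-verified Lean document; each statement's English description precedes it below -/
import Mathlib

section
/- Let 0 < α < 1 and let (x_n) be a bounded sequence of real numbers such that (x_n) is not p-summable (i.e., Σ|x_n|^p = ∞) for some 1 ≤ p < ∞. Then there exists a bounded sequence (y_n) of nonnegative reals such that (x_n y_n) is p-summable but (x_n y_n^α) is not p-summable. -/
/-- Bernoulli-type inequality for negative exponents: for `0 < u ≤ 1` and `ε ≥ 0`,
`1 + ε * (1 - u) ≤ u ^ (-ε)`. -/
lemma aux_bernoulli (ε u : ℝ) (hε : 0 ≤ ε) (hu : 0 < u) (hu1 : u ≤ 1) :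
    1 + ε * (1 - u) ≤ u ^ (-ε) := by
  rw [Real.rpow_def_of_pos hu]
  calc 1 + ε * (1 - u) = ε * (1 - u) + 1 := by ring
    _ ≤ Real.exp (ε * (1 - u)) := Real.add_one_le_exp _
    _ ≤ Real.exp (Real.log u * -ε) := by
        apply Real.exp_le_exp.mpr
        have h := Real.log_le_sub_one_of_pos hu
        nlinarith

/-- Key Abel–Dini estimate: for `0 < s ≤ t` and `ε > 0`,
`(t - s) * t ^ (-1 - ε) ≤ ε⁻¹ * (s ^ (-ε) - t ^ (-ε))`. -/
lemma aux_key (ε s t : ℝ) (hε : 0 < ε) (hs : 0 < s) (hst : s ≤ t) :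
    (t - s) * t ^ (-1 - ε) ≤ ε⁻¹ * (s ^ (-ε) - t ^ (-ε)) := by
  have ht : 0 < t := lt_of_lt_of_le hs hst
  have hu : 0 < s / t := div_pos hs ht
  have hu1 : s / t ≤ 1 := (div_le_one ht).mpr hst
  have hb := aux_bernoulli ε (s / t) hε.le hu hu1
  have hdiv : (s / t) ^ (-ε) = s ^ (-ε) / t ^ (-ε) :=
    Real.div_rpow hs.le ht.le (-ε)
  have htε : 0 < t ^ (-ε) := Real.rpow_pos_of_pos ht _
  have h1 : t ^ (-ε) * (1 + ε * (1 - s / t)) ≤ s ^ (-ε) := by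
    calc t ^ (-ε) * (1 + ε * (1 - s / t)) ≤ t ^ (-ε) * ((s / t) ^ (-ε)) :=
          mul_le_mul_of_nonneg_left hb htε.le
      _ = s ^ (-ε) := by rw [hdiv]; field_simp
  have h2 : t ^ (-1 - ε) = t ^ (-ε) / t := by
    rw [show (-1 - ε : ℝ) = -ε + (-1) by ring, Real.rpow_add ht, Real.rpow_neg_one]
    ring
  rw [h2]
  have key2 : (t - s) * (t ^ (-ε) / t) * ε ≤ s ^ (-ε) - t ^ (-ε) := by
    have heq : (t - s) * (t ^ (-ε) / t) * ε = t ^ (-ε) * (ε * (1 - s / t)) := by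
      field_simp
    rw [heq]; nlinarith [h1]
  rw [← le_div_iff₀ hε] at key2
  exact le_trans key2 (le_of_eq (div_eq_inv_mul _ _))

theorem stmt0 (α p : ℝ) (hα0 : 0 < α) (hα1 : α < 1) (hp : 1 ≤ p)
    (x : ℕ → ℝ) (hbdd : ∃ C : ℝ, ∀ n, |x n| ≤ C)
    (hns : ¬ Summable fun n => |x n| ^ p) :
    ∃ y : ℕ → ℝ, (∀ n, 0 ≤ y n) ∧ (∃ C : ℝ, ∀ n, y n ≤ C) ∧
      (Summable fun n => |x n * y n| ^ p) ∧
      ¬ Summable fun n => |x n * y n ^ α| ^ p := by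
  have hp0 : (0 : ℝ) < p := lt_of_lt_of_le one_pos hp
  set a : ℕ → ℝ := fun n => |x n| ^ p with ha_def
  have ha : ∀ n, 0 ≤ a n := fun n => Real.rpow_nonneg (abs_nonneg _) p
  set T : ℕ → ℝ := fun n => 1 + ∑ i ∈ Finset.range n, a i with hT_def
  have hT1 : ∀ n, (1 : ℝ) ≤ T n := by
    intro n
    have : 0 ≤ ∑ i ∈ Finset.range n, a i := Finset.sum_nonneg fun i _ => ha i
    simp only [hT_def]; linarith
  have hTpos : ∀ n, (0 : ℝ) < T n := fun n => lt_of_lt_of_le one_pos (hT1 n)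
  have hTs : ∀ n, T (n + 1) = T n + a n := by
    intro n; simp only [hT_def, Finset.sum_range_succ]; ring
  set ε : ℝ := 1 / α - 1 with hε_def
  have hε : 0 < ε := by
    have : (1 : ℝ) < 1 / α := (one_lt_div hα0).mpr hα1
    simp only [hε_def]; linarith
  set e : ℝ := -(α * p)⁻¹ with he_def
  obtain ⟨C, hC⟩ := hbdd
  set M : ℝ := (1 + |C|) ^ p with hM_def
  have hM0 : (0 : ℝ) ≤ M := Real.rpow_nonneg (by positivity) _
  have haM : ∀ n, a n ≤ M := by
    intro n
    exact Real.rpow_le_rpow (abs_nonneg _)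
      (le_trans (hC n) (le_trans (le_abs_self C) (by linarith [abs_nonneg C]))) hp0.le
  have hTshift : ∀ n, T (n + 1) ≤ (1 + M) * T n := by
    intro n
    have h1 := hT1 n
    have := haM n
    rw [hTs n]; nlinarith
  set K : ℝ := (1 + M) ^ (1 + ε) with hK_def
  have hK0 : (0 : ℝ) ≤ K := Real.rpow_nonneg (by linarith) _
  have hcomp : ∀ n, T n ^ (-1 - ε) ≤ K * T (n + 1) ^ (-1 - ε) := by
    intro n
    have h1 : (1 + M)⁻¹ * T (n + 1) ≤ T n := by
      rw [inv_mul_le_iff₀ (by linarith : (0:ℝ) < 1 + M)]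
      exact hTshift n
    have h2 : (0 : ℝ) < (1 + M)⁻¹ * T (n + 1) := by
      have := hTpos (n + 1); positivity
    calc T n ^ (-1 - ε) ≤ ((1 + M)⁻¹ * T (n + 1)) ^ (-1 - ε) :=
          Real.rpow_le_rpow_of_nonpos h2 h1 (by linarith)
      _ = ((1 + M)⁻¹) ^ (-1 - ε) * T (n + 1) ^ (-1 - ε) :=
          Real.mul_rpow (by positivity) (hTpos _).le
      _ = K * T (n + 1) ^ (-1 - ε) := by
          congr 1
          rw [hK_def, ← Real.rpow_neg_one ((1:ℝ) + M), ← Real.rpow_mul (by linarith)]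
          congr 1; ring
  refine ⟨fun n => T n ^ e, ?_, ⟨1, ?_⟩, ?_, ?_⟩
  · intro n; exact Real.rpow_nonneg (hTpos _).le _
  · intro n
    apply Real.rpow_le_one_of_one_le_of_nonpos (hT1 _)
    simp only [he_def]
    exact neg_nonpos.mpr (by positivity)
  · -- Summable part
    have hrw : ∀ n, |x n * T n ^ e| ^ p = a n * T n ^ (-1 - ε) := by
      intro n
      have hTe : (0 : ℝ) ≤ T n ^ e := Real.rpow_nonneg (hTpos _).le _
      rw [abs_mul, abs_of_nonneg hTe, Real.mul_rpow (abs_nonneg _) hTe,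
        ← Real.rpow_mul (hTpos _).le]
      have hep : e * p = -1 - ε := by
        simp only [he_def, hε_def]
        field_simp
        ring
      rw [hep]
    simp only [hrw]
    apply summable_of_sum_range_le (c := K * ε⁻¹)
    · intro n
      exact mul_nonneg (ha n) (Real.rpow_nonneg (hTpos _).le _)
    · intro N
      have hstep : ∀ n, a n * T n ^ (-1 - ε) ≤
          K * (ε⁻¹ * (T n ^ (-ε) - T (n + 1) ^ (-ε))) := by
        intro n
        have hst : T n ≤ T (n + 1) := by rw [hTs]; linarith [ha n]
        have hk := aux_key ε (T n) (T (n + 1)) hε (hTpos n) hst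
        have h3 : T (n + 1) - T n = a n := by rw [hTs]; ring
        rw [h3] at hk
        calc a n * T n ^ (-1 - ε) ≤ a n * (K * T (n + 1) ^ (-1 - ε)) :=
              mul_le_mul_of_nonneg_left (hcomp n) (ha n)
          _ = K * (a n * T (n + 1) ^ (-1 - ε)) := by ring
          _ ≤ K * (ε⁻¹ * (T n ^ (-ε) - T (n + 1) ^ (-ε))) :=
              mul_le_mul_of_nonneg_left hk hK0
      calc ∑ n ∈ Finset.range N, a n * T n ^ (-1 - ε)
          ≤ ∑ n ∈ Finset.range N, K * (ε⁻¹ * (T n ^ (-ε) - T (n + 1) ^ (-ε))) :=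
            Finset.sum_le_sum fun n _ => hstep n
        _ = K * ε⁻¹ * (T 0 ^ (-ε) - T N ^ (-ε)) := by
            simp_rw [← mul_assoc, ← Finset.mul_sum,
              Finset.sum_range_sub' (fun n => T n ^ (-ε))]
        _ ≤ K * ε⁻¹ := by
            have h0 : T 0 ^ (-ε) = 1 := by
              have : T 0 = 1 := by simp [hT_def]
              rw [this, Real.one_rpow]
            have h4 : (0 : ℝ) ≤ T N ^ (-ε) := Real.rpow_nonneg (hTpos _).le _
            rw [h0]
            nlinarith [mul_nonneg (mul_nonneg hK0 (inv_nonneg.mpr hε.le)) h4]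
  · -- Not summable part
    have hrw : ∀ n, |x n * (T n ^ e) ^ α| ^ p = a n * (T n)⁻¹ := by
      intro n
      have hTe : (0 : ℝ) ≤ (T n ^ e) ^ α :=
        Real.rpow_nonneg (Real.rpow_nonneg (hTpos _).le _) _
      rw [abs_mul, abs_of_nonneg hTe, Real.mul_rpow (abs_nonneg _) hTe,
        ← Real.rpow_mul (hTpos _).le, ← Real.rpow_mul (hTpos _).le]
      have hep : e * α * p = -1 := by
        simp only [he_def]
        field_simp
      rw [hep, Real.rpow_neg_one]
    simp only [hrw]
    have htop : Filter.Tendsto T Filter.atTop Filter.atTop := by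
      have h := (not_summable_iff_tendsto_nat_atTop_of_nonneg ha).mp hns
      simpa only [hT_def] using Filter.tendsto_atTop_add_const_left _ 1 h
    have hlog : Filter.Tendsto (fun N => Real.log (T N)) Filter.atTop Filter.atTop :=
      Real.tendsto_log_atTop.comp htop
    rw [not_summable_iff_tendsto_nat_atTop_of_nonneg
      (fun n => mul_nonneg (ha n) (inv_nonneg.mpr (hTpos _).le))]
    apply Filter.tendsto_atTop_mono _ hlog
    intro N
    have hstep : ∀ n, Real.log (T (n + 1)) - Real.log (T n) ≤ a n * (T n)⁻¹ := by
      intro n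
      have h1 := Real.log_le_sub_one_of_pos (div_pos (hTpos (n + 1)) (hTpos n))
      rw [Real.log_div (hTpos (n + 1)).ne' (hTpos n).ne'] at h1
      have h2 : T (n + 1) / T n - 1 = a n * (T n)⁻¹ := by
        rw [hTs n, add_div, div_self (hTpos n).ne', div_eq_mul_inv]; ring
      rw [h2] at h1
      linarith
    calc Real.log (T N) = Real.log (T N) - Real.log (T 0) := by
          have : T 0 = 1 := by simp [hT_def]
          rw [this, Real.log_one]; ring
      _ = ∑ n ∈ Finset.range N, (Real.log (T (n + 1)) - Real.log (T n)) := by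
          rw [Finset.sum_range_sub (fun n => Real.log (T n))]
      _ ≤ ∑ n ∈ Finset.range N, a n * (T n)⁻¹ :=
          Finset.sum_le_sum fun n _ => hstep n
end

section
/- Let 0 < α < 1 and let (x_n) be a sequence of real numbers tending to 0 with Σ_{n}|x_n| = ∞. Then there exist mutually disjoint finite-or-infinite subsets I_1, I_2, … of ℕ such that Σ_{n∈I_k}|x_n| ≥ 1 for each k, and defining y_n = k^{-1/α} for n ∈ I_k and y_n = 0 otherwise, the sequence (x_n y_n) is absolutely summable while (x_n y_n^α) is not absolutely summable. -/
open Finset Filter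

theorem stmt1 (α : ℝ) (hα0 : 0 < α) (hα1 : α < 1) (x : ℕ → ℝ)
    (hx0 : Filter.Tendsto x Filter.atTop (nhds 0))
    (hns : ¬ Summable fun n => |x n|) :
    ∃ I : ℕ → Set ℕ, Pairwise (Function.onFun Disjoint I) ∧
      (∀ k, 1 ≤ ∑' n : I k, |x n|) ∧
      ∀ y : ℕ → ℝ,
        (∀ k, ∀ n ∈ I k, y n = ((k : ℝ) + 1) ^ (-(1 / α))) →
        (∀ n, n ∉ ⋃ k, I k → y n = 0) →
        (Summable fun n => |x n * y n|) ∧ ¬ Summable fun n => |x n * y n ^ α| := by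
  -- x_n eventually ≤ 1 in absolute value
  obtain ⟨M, hM⟩ : ∃ M, ∀ n ≥ M, |x n| ≤ 1 := by
    have h : Tendsto (fun n => |x n|) atTop (nhds 0) := by
      simpa using hx0.abs
    have h2 : ∀ᶠ n in atTop, |x n| ≤ 1 := h.eventually_le_const one_pos
    exact eventually_atTop.1 h2
  -- partial sums diverge
  have hdiv : Tendsto (fun n => ∑ i ∈ range n, |x i|) atTop atTop := by
    rwa [← not_summable_iff_tendsto_nat_atTop_of_nonneg (fun n => abs_nonneg _)]
  -- step lemma: from any a we can find a block [a, b) with sum in [1, 2]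
  have hstep : ∀ a : ℕ, ∃ b : ℕ, a < b ∧ (1 ≤ ∑ i ∈ Ico a b, |x i|) ∧
      (M ≤ a → ∑ i ∈ Ico a b, |x i| ≤ 2) := by
    intro a
    have hex : ∃ b, a < b ∧ 1 ≤ ∑ i ∈ Ico a b, |x i| := by
      obtain ⟨b, hb1, hb2⟩ :=
        ((hdiv.eventually_ge_atTop (∑ i ∈ range a, |x i| + 1)).and
          (eventually_ge_atTop (a + 1))).exists
      refine ⟨b, hb2, ?_⟩
      rw [Finset.sum_Ico_eq_sub _ (by omega)]
      linarith
    classical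
    set b := Nat.find hex with hbdef
    obtain ⟨hab, hsum⟩ := Nat.find_spec hex
    refine ⟨b, hab, hsum, fun hMa => ?_⟩
    have hb1 : a ≤ b - 1 := by omega
    have hsplit : ∑ i ∈ Ico a b, |x i| = ∑ i ∈ Ico a (b-1), |x i| + |x (b-1)| := by
      have : ∑ i ∈ Ico a (b-1), |x i| + ∑ i ∈ Ico (b-1) b, |x i| = ∑ i ∈ Ico a b, |x i| :=
        Finset.sum_Ico_consecutive _ hb1 (by omega)
      have h2 : Ico (b-1) b = {b-1} := by
        have : b = (b-1) + 1 := by omega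
        rw [this]; simp
      rw [h2] at this; simpa using this.symm
    have hle1 : ∑ i ∈ Ico a (b-1), |x i| ≤ 1 := by
      rcases eq_or_lt_of_le hb1 with h | h
      · rw [← h]; simp
      · have := Nat.find_min hex (m := b - 1) (by omega)
        push_neg at this
        exact (this h).le
    have hxb : |x (b-1)| ≤ 1 := hM _ (by omega)
    rw [hsplit]; linarith
  choose F hF1 hF2 hF3 using hstep
  -- block endpoints
  set N : ℕ → ℕ := fun k => Nat.rec M (fun _ a => F a) k with hNdef
  have hNs : ∀ k, N (k + 1) = F (N k) := fun k => rfl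
  have hNlt : ∀ k, N k < N (k + 1) := fun k => hF1 (N k)
  have hmono : StrictMono N := strictMono_nat_of_lt_succ hNlt
  have hNM : ∀ k, M ≤ N k := by
    intro k
    induction k with
    | zero => exact le_refl M
    | succ k ih => exact ih.trans (hNlt k).le
  refine ⟨fun k => (↑(Finset.Ico (N k) (N (k + 1))) : Set ℕ), ?_, ?_, ?_⟩
  · -- pairwise disjoint
    have h : ∀ m n, m < n →
        Disjoint ((↑(Finset.Ico (N m) (N (m+1))) : Set ℕ)) ((↑(Finset.Ico (N n) (N (n+1))) : Set ℕ)) := by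
      intro m n hmn
      rw [Set.disjoint_left]
      intro a ha ha'
      simp only [Finset.coe_Ico, Set.mem_Ico] at ha ha'
      have h2 : N (m + 1) ≤ N n := hmono.monotone hmn
      omega
    exact fun m n hmn => hmn.lt_or_gt.elim (fun h' => h m n h') (fun h' => (h n m h').symm)
  · -- each block has sum ≥ 1
    intro k
    rw [Finset.tsum_subtype' (Finset.Ico (N k) (N (k+1))) (fun n => |x n|)]
    exact hF2 (N k)
  · -- main part
    intro y hy1 hy2
    set c : ℕ → ℝ := fun k => ((k : ℝ) + 1) ^ (-(1 / α)) with hcdef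
    have hc : ∀ k, 0 < c k := fun k => Real.rpow_pos_of_pos (by positivity) _
    have hαne : α ≠ 0 := ne_of_gt hα0
    -- summability of the majorant
    have hg : Summable (fun k => 2 * c k) := by
      apply Summable.mul_left
      have h1 : Summable (fun n : ℕ => (n : ℝ) ^ (-(1 / α))) := by
        apply Real.summable_nat_rpow.2
        have : 1 < 1 / α := one_lt_one_div hα0 hα1
        linarith
      have h2 := (summable_nat_add_iff 1).2 h1
      apply h2.congr
      intro k
      simp only [hcdef]
      push_cast
      ring_nf
    -- y vanishes below M
    have hzero : ∀ n < M, y n = 0 := by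
      intro n hn
      apply hy2
      intro hmem
      simp only [Set.mem_iUnion, Finset.coe_Ico, Set.mem_Ico] at hmem
      obtain ⟨k, hk1, _⟩ := hmem
      exact absurd (le_trans (hNM k) hk1) (by omega)
    -- telescoping sums over consecutive blocks
    have htel : ∀ (f : ℕ → ℝ) (K : ℕ),
        ∑ n ∈ Ico M (N K), f n = ∑ k ∈ range K, ∑ n ∈ Ico (N k) (N (k+1)), f n := by
      intro f K
      induction K with
      | zero => simp [hNdef]
      | succ K ih =>
        rw [Finset.sum_range_succ, ← ih,
          ← Finset.sum_Ico_consecutive f (show M ≤ N K from hNM K) (hNlt K).le]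
    -- block values for |x n * y n|
    have hblock : ∀ k, ∑ n ∈ Ico (N k) (N (k+1)), |x n * y n|
        = c k * ∑ n ∈ Ico (N k) (N (k+1)), |x n| := by
      intro k
      rw [Finset.mul_sum]
      apply Finset.sum_congr rfl
      intro n hn
      rw [hy1 k n (Finset.mem_coe.2 hn), abs_mul, abs_of_pos (hc k), mul_comm]
    -- bound sums over Ico M (N K) by partial sums of the majorant
    have hbound : ∀ K, ∑ n ∈ Ico M (N K), |x n * y n| ≤ ∑' k, 2 * c k := by
      intro K
      rw [htel _ K]
      calc ∑ k ∈ range K, ∑ n ∈ Ico (N k) (N (k+1)), |x n * y n|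
          ≤ ∑ k ∈ range K, 2 * c k := by
            apply Finset.sum_le_sum
            intro k _
            rw [hblock k, mul_comm (c k)]
            exact mul_le_mul_of_nonneg_right
              (by rw [hNs k] at *; exact hF3 (N k) (hNM k)) (hc k).le
        _ ≤ ∑' k, 2 * c k := Summable.sum_le_tsum _ (fun k _ => by positivity) hg
    constructor
    · -- summability of x n * y n
      apply summable_of_sum_range_le (fun n => abs_nonneg _)
      intro L
      calc ∑ n ∈ range L, |x n * y n|
          ≤ ∑ n ∈ range (N L), |x n * y n| :=
            Finset.sum_le_sum_of_subset_of_nonneg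
              (Finset.range_subset_range.2 hmono.le_apply) (fun _ _ _ => abs_nonneg _)
        _ = ∑ n ∈ Ico M (N L), |x n * y n| := by
            rw [Finset.range_eq_Ico,
              ← Finset.sum_Ico_consecutive _ (Nat.zero_le M) (hNM L)]
            have hz : ∑ n ∈ Ico 0 M, |x n * y n| = 0 :=
              Finset.sum_eq_zero (fun n hn => by
                rw [hzero n (Finset.mem_Ico.1 hn).2]; simp)
            rw [hz, zero_add]
        _ ≤ ∑' k, 2 * c k := hbound L
    · -- non-summability of x n * y n ^ α
      intro hS
      -- block values for |x n * y n ^ α|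
      have hck : ∀ k : ℕ, (c k) ^ α = ((k : ℝ) + 1)⁻¹ := by
        intro k
        have h0 : (0:ℝ) ≤ (k : ℝ) + 1 := by positivity
        have h1 : (((k:ℝ)+1) ^ (-(1/α) * α)) = ((((k:ℝ)+1) ^ (-(1/α))) ^ α) :=
          Real.rpow_mul h0 _ _
        have h2 : -(1/α) * α = -1 := by field_simp
        rw [hcdef]
        rw [← h1, h2, Real.rpow_neg_one]
      have hblock' : ∀ k, ∑ n ∈ Ico (N k) (N (k+1)), |x n * y n ^ α|
          = ((k : ℝ) + 1)⁻¹ * ∑ n ∈ Ico (N k) (N (k+1)), |x n| := by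
        intro k
        rw [Finset.mul_sum]
        apply Finset.sum_congr rfl
        intro n hn
        rw [hy1 k n (Finset.mem_coe.2 hn)]
        rw [show ((k:ℝ)+1) ^ (-(1/α)) = c k from rfl, hck k, abs_mul, mul_comm]
        congr 1
        exact abs_of_pos (by positivity)
      have hlow : ∀ K, ∑ k ∈ range K, ((k : ℝ) + 1)⁻¹ ≤ ∑' n, |x n * y n ^ α| := by
        intro K
        calc ∑ k ∈ range K, ((k : ℝ) + 1)⁻¹
            ≤ ∑ k ∈ range K, ∑ n ∈ Ico (N k) (N (k+1)), |x n * y n ^ α| := by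
              apply Finset.sum_le_sum
              intro k _
              rw [hblock' k]
              have h1 : (1:ℝ) ≤ ∑ n ∈ Ico (N k) (N (k+1)), |x n| := by
                rw [hNs k] at *; exact hF2 (N k)
              have h2 : (0:ℝ) < ((k : ℝ) + 1)⁻¹ := by positivity
              nlinarith
          _ = ∑ n ∈ Ico M (N K), |x n * y n ^ α| := (htel _ K).symm
          _ ≤ ∑' n, |x n * y n ^ α| := Summable.sum_le_tsum _ (fun n _ => abs_nonneg _) hS
      obtain ⟨K, hK⟩ :=
        (Real.tendsto_sum_range_one_div_nat_succ_atTop.eventually_gt_atTop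
          (∑' n, |x n * y n ^ α|)).exists
      have : ∑ i ∈ range K, (1 / ((i:ℝ) + 1)) ≤ ∑' n, |x n * y n ^ α| := by
        simpa only [one_div] using hlow K
      linarith
end

section
/- Let B be a commutative Banach algebra and let (A_t)_{t∈[2,∞)} be a family of closed subspaces of B such that A_s ⊆ A_t for s ≤ t and A_t · A_t ⊆ A_{t/2 ∨ 2} whenever t ≥ 4 (products of elements of A_t lie in A_{t/2}). Fix p > 2 with A_p ≠ A_2 and set p̃ = inf{q ∈ [2,∞) : A_q = A_p}. If p̃ > 1 and 0 < ε < min{1, p - p̃} with A_{p̃+ε} = A_p, then setting p' = p̃ + ε one has p'/2 < p̃ and hence A_{p'/2} ⊊ A_{p'} = A_p; in particular the closure of A_p · A_p is a proper subspace of A_p, so A_p is not square dense. -/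
theorem stmt13 {B : Type*} [NormedCommRing B] [NormedAlgebra ℂ B] [CompleteSpace B]
    (A : ℝ → Submodule ℂ B) (hclosed : ∀ t : ℝ, IsClosed (A t : Set B))
    (hmono : ∀ s t : ℝ, 2 ≤ s → s ≤ t → A s ≤ A t)
    (hprod : ∀ t : ℝ, 2 ≤ t → ∀ u ∈ A t, ∀ v ∈ A t, u * v ∈ A (max (t / 2) 2))
    (p : ℝ) (hp : 2 < p) (hne : A p ≠ A 2)
    (pt : ℝ) (hpt : pt = sInf {q : ℝ | 2 ≤ q ∧ A q = A p}) (hpt1 : 1 < pt)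
    (ε : ℝ) (hε0 : 0 < ε) (hε : ε < min 1 (p - pt)) (hAε : A (pt + ε) = A p) :
    (pt + ε) / 2 < pt ∧ A (pt + ε) = A p ∧ A (max ((pt + ε) / 2) 2) < A p ∧
    closure ((Submodule.span ℂ {w : B | ∃ u ∈ A p, ∃ v ∈ A p, w = u * v} : Submodule ℂ B) : Set B)
      ≠ (A p : Set B) := by
  have hS : p ∈ {q : ℝ | 2 ≤ q ∧ A q = A p} := ⟨le_of_lt hp, rfl⟩
  have hbdd : BddBelow {q : ℝ | 2 ≤ q ∧ A q = A p} := ⟨2, fun x hx => hx.1⟩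
  have hptle : pt ≤ p := hpt ▸ csInf_le hbdd hS
  have hpt2 : 2 ≤ pt := hpt ▸ le_csInf ⟨p, hS⟩ (fun x hx => hx.1)
  have hε1 : ε < 1 := lt_of_lt_of_le hε (min_le_left _ _)
  have h1 : (pt + ε) / 2 < pt := by linarith
  have hq2 : 2 ≤ max ((pt + ε) / 2) 2 := le_max_right _ _
  have hqp : max ((pt + ε) / 2) 2 ≤ p := max_le (by linarith) (le_of_lt hp)
  have hAne : A (max ((pt + ε) / 2) 2) ≠ A p := by
    intro h
    rcases le_or_gt ((pt + ε) / 2) 2 with hc | hc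
    · rw [max_eq_right hc] at h
      exact hne h.symm
    · rw [max_eq_left (le_of_lt hc)] at h
      have h2 := csInf_le hbdd (Set.mem_setOf.2 ⟨le_of_lt hc, h⟩)
      rw [← hpt] at h2
      linarith
  have hlt : A (max ((pt + ε) / 2) 2) < A p :=
    lt_of_le_of_ne (hmono _ p hq2 hqp) hAne
  refine ⟨h1, hAε, hlt, ?_⟩
  have hsub : {w : B | ∃ u ∈ A p, ∃ v ∈ A p, w = u * v} ⊆
      (A (max ((pt + ε) / 2) 2) : Set B) := by
    rintro w ⟨u, hu, v, hv, rfl⟩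
    have hu' : u ∈ A (pt + ε) := by rw [hAε]; exact hu
    have hv' : v ∈ A (pt + ε) := by rw [hAε]; exact hv
    exact hprod (pt + ε) (by linarith) u hu' v hv'
  have hspan : (Submodule.span ℂ {w : B | ∃ u ∈ A p, ∃ v ∈ A p, w = u * v} : Set B) ⊆
      (A (max ((pt + ε) / 2) 2) : Set B) := Submodule.span_le.2 hsub
  intro hcl
  obtain ⟨x, hxp, hxq⟩ := SetLike.exists_of_lt hlt
  have hx : x ∈ closure ((Submodule.span ℂ {w : B | ∃ u ∈ A p, ∃ v ∈ A p, w = u * v} :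
      Submodule ℂ B) : Set B) := hcl ▸ hxp
  exact hxq (closure_minimal hspan (hclosed _) hx)
end

section
/- Let Θ be a countable set and a ∈ ℓ^∞(Θ) with ‖a‖_∞ ≤ 1, and suppose Σ_{θ∈Θ}|a(θ)|^p = ∞ for some p > 2. Set α = (p-2)/(2p) ∈ (0, 1/2). Then there exists b ∈ ℓ^∞(Θ) with ‖b‖_∞ ≤ 1 such that Σ_θ |a(θ)b(θ)|^p < ∞ but Σ_θ |a(θ) b(θ)^α|^p = ∞. -/
open Finset Filter Real

theorem stmt18 {Θ : Type*} [Countable Θ] (p : ℝ) (hp : 2 < p)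
    (a : Θ → ℂ) (ha : ∀ θ, ‖a θ‖ ≤ 1)
    (hns : ¬ Summable fun θ => ‖a θ‖ ^ p) :
    ∃ b : Θ → ℝ, (∀ θ, 0 ≤ b θ) ∧ (∀ θ, b θ ≤ 1) ∧
      (Summable fun θ => (‖a θ‖ * b θ) ^ p) ∧
      ¬ Summable fun θ => (‖a θ‖ * b θ ^ ((p - 2) / (2 * p))) ^ p := by
  have hp0 : (0:ℝ) < p := by linarith
  have hp2 : (0:ℝ) < p - 2 := by linarith
  cases finite_or_infinite Θ with
  | inl h => exact absurd (Summable.of_finite) hns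
  | inr h =>
  letI := Encodable.ofCountable Θ
  letI := Denumerable.ofEncodableOfInfinite Θ
  obtain ⟨e⟩ : Nonempty (ℕ ≃ Θ) := ⟨(Denumerable.eqv Θ).symm⟩
  set c : ℕ → ℝ := fun n => ‖a (e n)‖ ^ p with hc_def
  have hc0 : ∀ n, 0 ≤ c n := fun n => rpow_nonneg (norm_nonneg _) _
  have hc1 : ∀ n, c n ≤ 1 := fun n => rpow_le_one (norm_nonneg _) (ha _) hp0.le
  have hcns : ¬ Summable c := fun hsum => hns (e.summable_iff.mp hsum)
  set S : ℕ → ℝ := fun n => 1 + ∑ i ∈ Finset.range n, c i with hS_def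
  have hS1 : ∀ n, 1 ≤ S n := fun n =>
    le_add_of_nonneg_right (Finset.sum_nonneg fun i _ => hc0 i)
  have hSpos : ∀ n, 0 < S n := fun n => lt_of_lt_of_le one_pos (hS1 n)
  have hS0 : S 0 = 1 := by simp [hS_def]
  have hSsucc : ∀ n, S (n+1) = S n + c n := by
    intro n; simp [hS_def, Finset.sum_range_succ]; ring
  have hSmono : ∀ n, S n ≤ S (n+1) := fun n => by rw [hSsucc]; linarith [hc0 n]
  have hStop : Tendsto S atTop atTop := by
    have h1 := (not_summable_iff_tendsto_nat_atTop_of_nonneg hc0).mp hcns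
    simpa [hS_def] using tendsto_atTop_add_const_left atTop 1 h1
  refine ⟨fun θ => S (e.symm θ + 1) ^ (-(2/(p-2)) : ℝ), ?_, ?_, ?_, ?_⟩
  · intro θ; exact rpow_nonneg (hSpos _).le _
  · intro θ
    exact rpow_le_one_of_one_le_of_nonpos (hS1 _)
      (neg_nonpos.mpr (by positivity))
  · rw [← Equiv.summable_iff e]
    have hterm : ∀ n, ((fun θ => (‖a θ‖ * S (e.symm θ + 1) ^ (-(2/(p-2)) : ℝ)) ^ p) ∘ e) n
        = c n * S (n+1) ^ (-(2/(p-2)) * p) := by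
      intro n
      simp only [Function.comp, e.symm_apply_apply]
      rw [mul_rpow (norm_nonneg _) (rpow_nonneg (hSpos _).le _),
        ← Real.rpow_mul (hSpos _).le]
    rw [funext hterm]
    have key : ∀ n, c n * S (n+1) ^ (-(2/(p-2)) * p) ≤ (S n)⁻¹ - (S (n+1))⁻¹ := by
      intro n
      have hq : (-(2/(p-2)) * p) = -(2*p/(p-2)) := by ring
      have h2q : (2:ℝ) ≤ 2*p/(p-2) := by
        rw [le_div_iff₀ hp2]; nlinarith
      have hpow : S n * S (n+1) ≤ S (n+1) ^ (2*p/(p-2)) := by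
        calc S n * S (n+1) ≤ S (n+1) * S (n+1) :=
              mul_le_mul_of_nonneg_right (hSmono n) (hSpos _).le
          _ = S (n+1) ^ (2:ℝ) := by
              rw [show (2:ℝ) = ((2:ℕ):ℝ) by norm_num, Real.rpow_natCast]; ring
          _ ≤ S (n+1) ^ (2*p/(p-2)) :=
              Real.rpow_le_rpow_of_exponent_le (hS1 _) h2q
      have hle : S (n+1) ^ (-(2*p/(p-2)) : ℝ) ≤ (S n * S (n+1))⁻¹ := by
        rw [Real.rpow_neg (hSpos _).le]
        exact inv_anti₀ (by positivity) hpow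
      have h1 : c n * S (n+1) ^ (-(2*p/(p-2)) : ℝ) ≤ c n * (S n * S (n+1))⁻¹ :=
        mul_le_mul_of_nonneg_left hle (hc0 n)
      have h2 : c n * (S n * S (n+1))⁻¹ = (S n)⁻¹ - (S (n+1))⁻¹ := by
        have hc : c n = S (n+1) - S n := by rw [hSsucc]; ring
        have h3 := (hSpos n).ne'
        have h4 := (hSpos (n+1)).ne'
        rw [hc]; field_simp
      rw [hq]; linarith
    apply summable_of_sum_range_le (c := 1)
      (fun n => mul_nonneg (hc0 n) (rpow_nonneg (hSpos _).le _))
    intro N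
    calc ∑ i ∈ Finset.range N, c i * S (i+1) ^ (-(2/(p-2)) * p)
        ≤ ∑ i ∈ Finset.range N, ((S i)⁻¹ - (S (i+1))⁻¹) :=
          Finset.sum_le_sum fun i _ => key i
      _ = (S 0)⁻¹ - (S N)⁻¹ := Finset.sum_range_sub' (fun n => (S n)⁻¹) N
      _ ≤ 1 := by rw [hS0]; simp [inv_nonneg.mpr (hSpos N).le]
  · intro hsum
    replace hsum := (Equiv.summable_iff e).mpr hsum
    have hterm : ∀ n, ((fun θ => (‖a θ‖ * (S (e.symm θ + 1) ^ (-(2/(p-2)) : ℝ)) ^ ((p-2)/(2*p))) ^ p) ∘ e) n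
        = c n * (S (n+1))⁻¹ := by
      intro n
      simp only [Function.comp, e.symm_apply_apply]
      rw [← Real.rpow_mul (hSpos _).le]
      have hα : -(2/(p-2)) * ((p-2)/(2*p)) = -(1/p) := by
        field_simp
      rw [hα, mul_rpow (norm_nonneg _) (rpow_nonneg (hSpos _).le _),
        ← Real.rpow_mul (hSpos _).le]
      have : -(1/p) * p = -1 := by field_simp
      rw [this, Real.rpow_neg_one]
    rw [funext hterm] at hsum
    have hnn : ∀ n, 0 ≤ c n * (S (n+1))⁻¹ :=
      fun n => mul_nonneg (hc0 n) (inv_nonneg.mpr (hSpos _).le)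
    have hbound : ∀ N, Real.log (S N) ≤ 2 * ∑' n, c n * (S (n+1))⁻¹ := by
      intro N
      have hterm2 : ∀ n, Real.log (S (n+1)) - Real.log (S n) ≤ 2 * (c n * (S (n+1))⁻¹) := by
        intro n
        have hlog : Real.log (S (n+1)) - Real.log (S n) ≤ c n / S n := by
          rw [← Real.log_div (hSpos _).ne' (hSpos _).ne']
          have := Real.log_le_sub_one_of_pos (div_pos (hSpos (n+1)) (hSpos n))
          have heq : S (n+1) / S n - 1 = c n / S n := by
            rw [hSsucc, add_div, div_self (hSpos n).ne']; ring
          linarith [heq ▸ this]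
        have hdiv : c n / S n ≤ 2 * c n / S (n+1) := by
          rw [div_le_div_iff₀ (hSpos n) (hSpos (n+1)), hSsucc]
          nlinarith [hc0 n, hc1 n, hS1 n]
        have : 2 * c n / S (n+1) = 2 * (c n * (S (n+1))⁻¹) := by ring
        linarith
      have hsumlog : Real.log (S N) ≤ ∑ i ∈ Finset.range N, 2 * (c i * (S (i+1))⁻¹) := by
        have := Finset.sum_le_sum (fun i (_ : i ∈ Finset.range N) => hterm2 i)
        rw [Finset.sum_range_sub (fun n => Real.log (S n)) N] at this
        rw [hS0, Real.log_one] at this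
        linarith
      calc Real.log (S N) ≤ ∑ i ∈ Finset.range N, 2 * (c i * (S (i+1))⁻¹) := hsumlog
        _ = 2 * ∑ i ∈ Finset.range N, c i * (S (i+1))⁻¹ := by rw [Finset.mul_sum]
        _ ≤ 2 * ∑' n, c n * (S (n+1))⁻¹ := by
            have := Summable.sum_le_tsum (Finset.range N) (fun i _ => hnn i) hsum
            linarith
    have hlogtop : Tendsto (fun N => Real.log (S N)) atTop atTop :=
      Real.tendsto_log_atTop.comp hStop
    obtain ⟨N, hN⟩ := (hlogtop.eventually_gt_atTop (2 * ∑' n, c n * (S (n+1))⁻¹)).exists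
    exact absurd (hbound N) (not_le.mpr hN)
end
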